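/- Let (a_n) be an arithmetic sequence and let x ∈ 𝕋 have canonical representation with digits (c_n(x)) and A = supp(x). If A is infinite, then the set 𝒢_A(𝕋) = {y ∈ 𝕋 : supp(y) ⊆ A and c_n(y) = c_n(x) for every n ∈ supp(y)} has cardinality 𝔠, the cardinality of the continuum. -/

import Mathlib

open Filter Topology

noncomputable section

/-- The circle group `𝕋 = ℝ/ℤ`. -/
abbrev Circle1 : Type := AddCircle (1 : ℝ)

/-- An arithmetic sequence `(a_n)_{n ≥ 1}`, with the convention `a 0 = 1`:
a strictly increasing sequence of positive integers with `1 < a 1` and `a n ∣ a (n+1)`. -/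
def IsArithSeq (a : ℕ → ℕ) : Prop :=
  a 0 = 1 ∧ StrictMono a ∧ ∀ n, a n ∣ a (n + 1)

/-- The ratio sequence: `q n = a n / a (n-1)` (so `q 1 = a 1`). -/
def ratioSeq (a : ℕ → ℕ) (n : ℕ) : ℕ := a n / a (n - 1)

/-- The subgroup of `𝕋` characterized by a sequence of integers `(u n)`. -/
def charSub (u : ℕ → ℕ) : Set Circle1 :=
  {x : Circle1 | Tendsto (fun n => (u n) • x) atTop (nhds 0)}

/-- The set `{r·a_{k-1} : k ≥ 1, 1 ≤ r ≤ q_k - 1}` whose increasing enumeration is `(d_n)`. -/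
def DSet (a : ℕ → ℕ) : Set ℕ :=
  {m | ∃ k, 1 ≤ k ∧ ∃ r, 1 ≤ r ∧ r ≤ ratioSeq a k - 1 ∧ m = r * a (k - 1)}

/-- `(d_n)` is the strictly increasing enumeration of `DSet a`. -/
def IsDSeq (a d : ℕ → ℕ) : Prop := StrictMono d ∧ Set.range d = DSet a

/-- An arithmetic-type sequence associated with the arithmetic sequence `(a_n)`:
a strictly increasing sequence of positive integers whose set of values contains all the
values `a k` (for `k ≥ 1`) and is contained in `DSet a`. -/
def IsArithTypeSeq (a e : ℕ → ℕ) : Prop :=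
  StrictMono e ∧ (∀ k, 1 ≤ k → a k ∈ Set.range e) ∧ Set.range e ⊆ DSet a

/-- `(c_n)_{n ≥ 1}` is the canonical representation of `x ∈ 𝕋` w.r.t. the arithmetic
sequence `(a_n)`: `0 ≤ c n ≤ q n - 1` for all `n ≥ 1`, `c n < q n - 1` infinitely often,
and `x = Σ_{n ≥ 1} c n / a n` in `𝕋`. -/
def IsCanonicalRep (a c : ℕ → ℕ) (x : Circle1) : Prop :=
  (∀ n, 1 ≤ n → c n ≤ ratioSeq a n - 1) ∧
  {n | 1 ≤ n ∧ c n < ratioSeq a n - 1}.Infinite ∧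
  x = ((∑' n : ℕ, (c (n + 1) : ℝ) / (a (n + 1) : ℝ) : ℝ) : Circle1)

/-- The support of a digit sequence: `supp(x) = {n ≥ 1 : c n ≠ 0}`. -/
def suppOf (c : ℕ → ℕ) : Set ℕ := {n | 1 ≤ n ∧ c n ≠ 0}

namespace AuxCard

variable {a : ℕ → ℕ}

lemma a_pos' (ha : IsArithSeq a) (n : ℕ) : 0 < a n := by
  have h := ha.2.1.monotone (Nat.zero_le n); rw [ha.1] at h; omega

lemma dvd_pred (ha : IsArithSeq a) {n : ℕ} (hn : 1 ≤ n) : a (n - 1) ∣ a n := by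
  have := ha.2.2 (n - 1)
  rwa [Nat.sub_add_cancel hn] at this

lemma two_mul_le (ha : IsArithSeq a) {n : ℕ} (hn : 1 ≤ n) : 2 * a (n - 1) ≤ a n := by
  obtain ⟨k, hk⟩ := dvd_pred ha hn
  have hlt : a (n - 1) < a n := ha.2.1 (by omega)
  have hp := a_pos' ha (n - 1)
  have hk2 : 2 ≤ k := by
    rcases k with _ | k
    · simp at hk; omega
    · rcases k with _ | k
      · simp at hk; omega
      · omega
  nlinarith

lemma q_mul (ha : IsArithSeq a) {n : ℕ} (hn : 1 ≤ n) : a n = ratioSeq a n * a (n - 1) :=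
  (Nat.div_mul_cancel (dvd_pred ha hn)).symm

lemma q_two (ha : IsArithSeq a) {n : ℕ} (hn : 1 ≤ n) : 2 ≤ ratioSeq a n :=
  (Nat.le_div_iff_mul_le (a_pos' ha _)).mpr (two_mul_le ha hn)

lemma key (ha : IsArithSeq a) {n : ℕ} (hn : 1 ≤ n) :
    ((ratioSeq a n - 1 : ℕ) : ℝ) / (a n : ℝ) = 1 / (a (n - 1) : ℝ) - 1 / (a n : ℝ) := by
  have h2 := q_two ha hn
  have hq := q_mul ha hn
  have hp1 : (0 : ℝ) < (a (n - 1) : ℝ) := by exact_mod_cast a_pos' ha _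
  have hp2 : (0 : ℝ) < (a n : ℝ) := by exact_mod_cast a_pos' ha n
  have hcast : ((ratioSeq a n - 1 : ℕ) : ℝ) = (ratioSeq a n : ℝ) - 1 := by
    push_cast [Nat.cast_sub (by omega : 1 ≤ ratioSeq a n)]; ring
  have hqc : (a n : ℝ) = (ratioSeq a n : ℝ) * (a (n - 1) : ℝ) := by exact_mod_cast hq
  rw [hcast]
  field_simp
  linear_combination -hqc


/-- telescoping term -/
def tt (a : ℕ → ℕ) (m : ℕ) : ℝ := 1 / (a m : ℝ) - 1 / (a (m + 1) : ℝ)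

lemma tt_nonneg (ha : IsArithSeq a) (m : ℕ) : 0 ≤ tt a m := by
  have h1 : (0:ℝ) < (a m : ℝ) := by exact_mod_cast a_pos' ha m
  have h2 : (a m : ℝ) ≤ (a (m+1) : ℝ) := by
    exact_mod_cast (ha.2.1 (Nat.lt_succ_self m)).le
  have := one_div_le_one_div_of_le h1 h2
  simp only [tt]; linarith

lemma tendsto_inv_a (ha : IsArithSeq a) :
    Tendsto (fun n => 1 / (a n : ℝ)) atTop (nhds 0) := by
  have h1 : Tendsto a atTop atTop := ha.2.1.tendsto_atTop
  have h2 : Tendsto (fun n => (a n : ℝ)) atTop atTop :=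
    tendsto_natCast_atTop_atTop.comp h1
  simp only [one_div]; exact h2.inv_tendsto_atTop

lemma hasSum_tt (ha : IsArithSeq a) (N : ℕ) :
    HasSum (fun k => tt a (k + N)) (1 / (a N : ℝ)) := by
  rw [hasSum_iff_tendsto_nat_of_nonneg (fun k => tt_nonneg ha (k + N))]
  have hps : ∀ K, ∑ k ∈ Finset.range K, tt a (k + N) = 1 / (a N : ℝ) - 1 / (a (K + N) : ℝ) := by
    intro K
    induction K with
    | zero => simp
    | succ K ih =>
      rw [Finset.sum_range_succ, ih]
      simp only [tt]
      rw [show K + N + 1 = K + 1 + N by omega]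
      ring
  simp only [hps]
  have : Tendsto (fun K : ℕ => 1 / (a (K + N) : ℝ)) atTop (nhds 0) :=
    (tendsto_inv_a ha).comp (tendsto_atTop_atTop_of_monotone
      (fun i j hij => by omega) (fun b => ⟨b, by omega⟩))
  simpa using tendsto_const_nhds.sub this

/-- digit terms -/
def dg (a d : ℕ → ℕ) (m : ℕ) : ℝ := (d (m + 1) : ℝ) / (a (m + 1) : ℝ)

lemma dg_nonneg (d : ℕ → ℕ) (m : ℕ) : 0 ≤ dg a d m := by
  apply div_nonneg <;> positivity

def Bnd (a d : ℕ → ℕ) : Prop := ∀ n, 1 ≤ n → d n ≤ ratioSeq a n - 1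

lemma dg_le_tt (ha : IsArithSeq a) {d : ℕ → ℕ} (hd : Bnd a d) (m : ℕ) :
    dg a d m ≤ tt a m := by
  have hk := key ha (show 1 ≤ m + 1 by omega)
  simp only [Nat.add_sub_cancel] at hk
  rw [show tt a m = 1 / (a m : ℝ) - 1 / (a (m+1) : ℝ) from rfl, ← hk]
  simp only [dg]
  have h1 : (0:ℝ) < (a (m+1) : ℝ) := by exact_mod_cast a_pos' ha (m+1)
  gcongr
  exact_mod_cast hd (m+1) (by omega)

lemma summable_dg (ha : IsArithSeq a) {d : ℕ → ℕ} (hd : Bnd a d) : Summable (dg a d) := by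
  apply Summable.of_nonneg_of_le (dg_nonneg d) (dg_le_tt ha hd)
  have := (hasSum_tt ha 0).summable
  simpa using this

def InfNonMax (a d : ℕ → ℕ) : Prop := {n | 1 ≤ n ∧ d n < ratioSeq a n - 1}.Infinite

lemma tail_lt (ha : IsArithSeq a) {d : ℕ → ℕ} (hd : Bnd a d) (hinf : InfNonMax a d) (N : ℕ) :
    ∑' k, dg a d (k + N) < 1 / (a N : ℝ) := by
  obtain ⟨m, hm, hmN⟩ := hinf.exists_gt N
  obtain ⟨hm1, hmlt⟩ := hm
  set k0 := m - 1 - N with hk0def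
  have hk0 : k0 + N + 1 = m := by omega
  have hstrict : dg a d (k0 + N) < tt a (k0 + N) := by
    have hk := key ha (show 1 ≤ m by omega)
    have : tt a (k0 + N) = ((ratioSeq a m - 1 : ℕ) : ℝ) / (a m : ℝ) := by
      rw [hk]; simp only [tt, hk0]
      rw [show k0 + N = m - 1 by omega]
    rw [this]
    simp only [dg, hk0]
    have hpos : (0:ℝ) < (a m : ℝ) := by exact_mod_cast a_pos' ha m
    gcongr
    try exact_mod_cast hmlt
  calc ∑' k, dg a d (k + N) < ∑' k, tt a (k + N) := by
        exact Summable.tsum_lt_tsum_of_nonneg (i := k0) (fun k => dg_nonneg d _)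
          (fun k => dg_le_tt ha hd _) hstrict (hasSum_tt ha N).summable
    _ = 1 / (a N : ℝ) := (hasSum_tt ha N).tsum_eq

lemma summable_dg_shift (ha : IsArithSeq a) {d : ℕ → ℕ} (hd : Bnd a d) (N : ℕ) :
    Summable (fun k => dg a d (k + N)) :=
  (summable_nat_add_iff N).mpr (summable_dg ha hd)

lemma F_nonneg (d : ℕ → ℕ) : 0 ≤ ∑' m, dg a d m := tsum_nonneg (dg_nonneg d)

lemma F_lt_one (ha : IsArithSeq a) {d : ℕ → ℕ} (hd : Bnd a d) (hinf : InfNonMax a d) :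
    ∑' m, dg a d m < 1 := by
  have := tail_lt ha hd hinf 0
  simpa [ha.1] using this

lemma F_strict (ha : IsArithSeq a) {d e : ℕ → ℕ} (hd : Bnd a d) (he : Bnd a e)
    (he' : InfNonMax a e) {n : ℕ} (hn : 1 ≤ n)
    (hpre : ∀ k, k < n → e k = d k) (hlt : e n < d n) :
    ∑' m, dg a e m < ∑' m, dg a d m := by
  have hsd := summable_dg ha hd
  have hse := summable_dg ha he
  have hpos : (0:ℝ) < (a n : ℝ) := by exact_mod_cast a_pos' ha n
  have hsplit : ∑' m, dg a e m = ∑ m ∈ Finset.range n, dg a e m + ∑' k, dg a e (k + n) :=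
    (Summable.sum_add_tsum_nat_add n hse).symm
  have htail := tail_lt ha he he' n
  have hsucc : n - 1 + 1 = n := by omega
  have hprefsum : ∑ m ∈ Finset.range (n-1), dg a e m = ∑ m ∈ Finset.range (n-1), dg a d m := by
    apply Finset.sum_congr rfl
    intro m hm
    simp only [Finset.mem_range] at hm
    simp only [dg, hpre (m+1) (by omega)]
  have hstep : (e n : ℝ) / (a n : ℝ) + 1 / (a n : ℝ) ≤ (d n : ℝ) / (a n : ℝ) := by
    rw [← add_div]
    gcongr
    have : (e n : ℕ) + 1 ≤ d n := hlt
    exact_mod_cast this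
  calc ∑' m, dg a e m = ∑ m ∈ Finset.range n, dg a e m + ∑' k, dg a e (k + n) := hsplit
    _ < ∑ m ∈ Finset.range n, dg a e m + 1 / (a n : ℝ) := by linarith
    _ = ∑ m ∈ Finset.range (n-1), dg a e m + ((e n : ℝ) / (a n : ℝ) + 1 / (a n : ℝ)) := by
        rw [← hsucc, Finset.sum_range_succ]
        simp only [dg, hsucc]
        try ring
    _ ≤ ∑ m ∈ Finset.range (n-1), dg a d m + (d n : ℝ) / (a n : ℝ) := by
        rw [hprefsum]; linarith
    _ = ∑ m ∈ Finset.range n, dg a d m := by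
        rw [← hsucc, Finset.sum_range_succ]
        simp only [dg, hsucc]
        try ring
    _ ≤ ∑' m, dg a d m := Summable.sum_le_tsum _ (fun i _ => dg_nonneg d i) hsd

end AuxCard

/-- if `A = supp(x)` is infinite then
`𝒢_A(𝕋) = {y : supp(y) ⊆ A, c_n(y) = c_n(x) on supp(y)}` has cardinality `𝔠`. -/
theorem card_G_A_continuum (a : ℕ → ℕ) (ha : IsArithSeq a) (c : ℕ → ℕ) (x : Circle1)
    (hc : IsCanonicalRep a c x) (A : Set ℕ) (hA : A = suppOf c) (hAinf : A.Infinite) :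
    Cardinal.mk ↥{y : Circle1 | ∃ c' : ℕ → ℕ, IsCanonicalRep a c' y ∧
        suppOf c' ⊆ A ∧ ∀ n ∈ suppOf c', c' n = c n} = Cardinal.continuum := by
  classical
  obtain ⟨hcb, hcinf, hxeq⟩ := hc
  have hmemA : ∀ n ∈ A, 1 ≤ n ∧ c n ≠ 0 := by rw [hA]; exact fun n hn => hn
  set G := {y : Circle1 | ∃ c' : ℕ → ℕ, IsCanonicalRep a c' y ∧
      suppOf c' ⊆ A ∧ ∀ n ∈ suppOf c', c' n = c n} with hG
  set cf : Set ℕ → ℕ → ℕ := fun S n => if n ∈ S then c n else 0 with hcf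
  have hbnd : ∀ S : Set ℕ, AuxCard.Bnd a (cf S) := by
    intro S n hn
    simp only [hcf]
    split
    · exact hcb n hn
    · exact Nat.zero_le _
  have hinfS : ∀ S : Set ℕ, AuxCard.InfNonMax a (cf S) := by
    intro S
    apply Set.Infinite.mono _ hcinf
    intro n hn
    refine ⟨hn.1, ?_⟩
    simp only [hcf]
    split
    · exact hn.2
    · have := AuxCard.q_two ha hn.1; omega
  set FS : Set ℕ → ℝ := fun S => ∑' m, AuxCard.dg a (cf S) m with hFS
  have hIco : ∀ S : Set ℕ, FS S ∈ Set.Ico (0:ℝ) 1 :=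
    fun S => ⟨AuxCard.F_nonneg _, AuxCard.F_lt_one ha (hbnd S) (hinfS S)⟩
  have hcfinj : ∀ S T : Set ℕ, S ⊆ A → T ⊆ A → cf S = cf T → S = T := by
    intro S T hS hT h
    ext n
    constructor
    · intro hn
      have h1 : cf S n = c n := if_pos hn
      have h2 : cf T n ≠ 0 := by rw [← h, h1]; exact (hmemA n (hS hn)).2
      by_contra hnT
      exact h2 (if_neg hnT)
    · intro hn
      have h1 : cf T n = c n := if_pos hn
      have h2 : cf S n ≠ 0 := by rw [h, h1]; exact (hmemA n (hT hn)).2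
      by_contra hnS
      exact h2 (if_neg hnS)
  have hFinj : ∀ S T : Set ℕ, S ⊆ A → T ⊆ A → FS S = FS T → S = T := by
    intro S T hS hT h
    apply hcfinj S T hS hT
    by_contra hne
    obtain ⟨hex⟩ : Nonempty (∃ n, cf S n ≠ cf T n) := ⟨Function.ne_iff.mp hne⟩
    set n := Nat.find hex with hndef
    have hnne : cf S n ≠ cf T n := Nat.find_spec hex
    have hpre : ∀ k, k < n → cf S k = cf T k := fun k hk => not_not.mp (Nat.find_min hex hk)
    have hn1 : 1 ≤ n := by
      rcases Nat.eq_zero_or_pos n with h0 | h1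
      · exfalso
        apply hnne
        rw [h0]
        have hS0 : (0:ℕ) ∉ S := fun hh => by have := (hmemA 0 (hS hh)).1; omega
        have hT0 : (0:ℕ) ∉ T := fun hh => by have := (hmemA 0 (hT hh)).1; omega
        simp [hcf, hS0, hT0]
      · exact h1
    rcases lt_or_gt_of_ne hnne with hlt | hlt
    · have := AuxCard.F_strict ha (hbnd T) (hbnd S) (hinfS S) hn1 hpre hlt
      simp only [hFS] at h
      exact absurd h (ne_of_lt this)
    · have := AuxCard.F_strict ha (hbnd S) (hbnd T) (hinfS T) hn1
        (fun k hk => (hpre k hk).symm) hlt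
      simp only [hFS] at h
      exact absurd h.symm (ne_of_lt this)
  have hmem : ∀ S : Set ℕ, S ⊆ A → ((FS S : ℝ) : Circle1) ∈ G := by
    intro S hS
    refine ⟨cf S, ⟨hbnd S, hinfS S, rfl⟩, ?_, ?_⟩
    · intro n hn
      have : cf S n ≠ 0 := hn.2
      have hnS : n ∈ S := by by_contra hh; exact this (if_neg hh)
      exact hS hnS
    · intro n hn
      have : cf S n ≠ 0 := hn.2
      have hnS : n ∈ S := by by_contra hh; exact this (if_neg hh)
      exact if_pos hnS
  apply le_antisymm
  · have h1 : Cardinal.mk ↥G ≤ Cardinal.mk Circle1 := Cardinal.mk_set_le _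
    have h2 : Cardinal.mk Circle1 ≤ Cardinal.mk ℝ := by
      apply Cardinal.mk_le_of_surjective (f := ((↑) : ℝ → Circle1))
      intro y
      exact QuotientAddGroup.induction_on y fun r => ⟨r, rfl⟩
    rw [Cardinal.mk_real] at h2
    exact h1.trans h2
  · haveI := hAinf.to_subtype
    have hAcard : Cardinal.mk ↥A = Cardinal.aleph0 := Cardinal.mk_eq_aleph0 _
    have hpow : Cardinal.continuum = Cardinal.mk ↥(𝒫 A) := by
      rw [Cardinal.mk_powerset, hAcard, Cardinal.two_power_aleph0]
    rw [hpow]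
    have ginj : Function.Injective
        (fun S : ↥(𝒫 A) => (⟨((FS S.1 : ℝ) : Circle1), hmem S.1 S.2⟩ : ↥G)) := by
      intro S T hST
      have hco : ((FS S.1 : ℝ) : Circle1) = ((FS T.1 : ℝ) : Circle1) := by
        simpa [Subtype.ext_iff] using hST
      have hmemIco : ∀ U : Set ℕ, FS U ∈ Set.Ico (0:ℝ) (0 + 1) := by
        intro U; rw [zero_add]; exact hIco U
      have heq : FS S.1 = FS T.1 :=
        (AddCircle.coe_eq_coe_iff_of_mem_Ico (hmemIco S.1) (hmemIco T.1)).mp hco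
      exact Subtype.ext (hFinj S.1 T.1 S.2 T.2 heq)
    exact Cardinal.mk_le_of_injective ginj
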